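/- Let G be a finite simple graph and x ∈ V(G) such that G \ x is a forest. Then either V(G) = N[x] and G \ x has no edges, or V(G) \ N[x] contains a vertex of degree at most one in G, or G contains an induced cycle C containing x such that every vertex of V(C) \ {x}, except for possibly one, has degree two in G. -/

import Mathlib

open SimpleGraph

/-- `G` contains a subdivision of `K₄` as a (not necessarily induced) subgraph:
there are four branch vertices joined by six pairwise internally disjoint paths. -/
def HasK4Subdivision {V : Type*} (G : SimpleGraph V) : Prop :=
  ∃ b : Fin 4 → V, Function.Injective b ∧
    ∃ P : ∀ i j : Fin 4, i < j → G.Walk (b i) (b j),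
      (∀ (i j : Fin 4) (hij : i < j), (P i j hij).IsPath) ∧
      (∀ (i j : Fin 4) (hij : i < j) (k l : Fin 4) (hkl : k < l), (i, j) ≠ (k, l) → ∀ w,
        w ∈ (P i j hij).support → w ∈ (P k l hkl).support →
          (w = b i ∨ w = b j) ∧ (w = b k ∨ w = b l))

/-- A graph is series-parallel if it contains no subdivision of `K₄` as a
(not necessarily induced) subgraph. -/
def SeriesParallel {V : Type*} (G : SimpleGraph V) : Prop := ¬ HasK4Subdivision G

/-- `G` has an induced subgraph isomorphic to a subdivision of `K₄`: four branch
vertices joined by six pairwise internally disjoint paths, such that every edge of `G`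
between vertices of the union of the paths is an edge of one of the paths. -/
def HasInducedK4Subdivision {V : Type*} (G : SimpleGraph V) : Prop :=
  ∃ b : Fin 4 → V, Function.Injective b ∧
    ∃ P : ∀ i j : Fin 4, i < j → G.Walk (b i) (b j),
      (∀ (i j : Fin 4) (hij : i < j), (P i j hij).IsPath) ∧
      (∀ (i j : Fin 4) (hij : i < j) (k l : Fin 4) (hkl : k < l), (i, j) ≠ (k, l) → ∀ w,
        w ∈ (P i j hij).support → w ∈ (P k l hkl).support →
          (w = b i ∨ w = b j) ∧ (w = b k ∨ w = b l)) ∧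
      (∀ a c : V, (∃ (i j : Fin 4) (hij : i < j), a ∈ (P i j hij).support) →
        (∃ (i j : Fin 4) (hij : i < j), c ∈ (P i j hij).support) → G.Adj a c →
          ∃ (i j : Fin 4) (hij : i < j), s(a, c) ∈ (P i j hij).edges)

/-- `G` is ISK4-free: no induced subgraph of `G` is a subdivision of `K₄`. -/
def ISK4Free {V : Type*} (G : SimpleGraph V) : Prop := ¬ HasInducedK4Subdivision G

/-- `G` is triangle-free. -/
def TriangleFree {V : Type*} (G : SimpleGraph V) : Prop := G.CliqueFree 3

/-- `G` has no induced subgraph isomorphic to `K₃,₃`. -/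
def K33Free {V : Type*} (G : SimpleGraph V) : Prop :=
  ¬ ∃ a b : Fin 3 → V, Function.Injective a ∧ Function.Injective b ∧
    (∀ i j, a i ≠ b j) ∧ (∀ i j, G.Adj (a i) (b j)) ∧
    (∀ i j, ¬ G.Adj (a i) (a j)) ∧ (∀ i j, ¬ G.Adj (b i) (b j))

/-- `C` is the vertex set of an induced cycle of `G`: the induced subgraph on `C` is
connected and every vertex of `C` has exactly two neighbors in `C`. -/
def IsInducedCycle {V : Type*} (G : SimpleGraph V) (C : Set V) : Prop :=
  C.Finite ∧ 3 ≤ C.ncard ∧ (G.induce C).Connected ∧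
    ∀ v ∈ C, (G.neighborSet v ∩ C).ncard = 2

/-- A hole is an induced cycle of length at least 4. -/
def IsHole {V : Type*} (G : SimpleGraph V) (C : Set V) : Prop :=
  IsInducedCycle G C ∧ 4 ≤ C.ncard

/-- `(C, x)` is a wheel: `C` is a hole and `x` has at least three neighbors in `C`. -/
def IsWheel {V : Type*} (G : SimpleGraph V) (C : Set V) (x : V) : Prop :=
  IsHole G C ∧ x ∉ C ∧ 3 ≤ (G.neighborSet x ∩ C).ncard

/-- The number of spokes of the wheel `(C, x)`. -/
noncomputable def numSpokes {V : Type*} (G : SimpleGraph V) (C : Set V) (x : V) : ℕ :=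
  (G.neighborSet x ∩ C).ncard

/-- `S` is (the vertex set of) a sector of the wheel `(C, x)`: a maximal path of the
hole `C` containing no spoke (neighbor of `x`) in its interior.  Here this is rendered
as: `S` is maximal among the subsets of `C` inducing a connected subgraph in which no
vertex with two neighbors inside the subset is a neighbor of `x`. -/
def IsSector {V : Type*} (G : SimpleGraph V) (C : Set V) (x : V) (S : Set V) : Prop :=
  S ⊆ C ∧ (G.induce S).Connected ∧
  (∀ v ∈ S, (G.neighborSet v ∩ S).ncard = 2 → ¬ G.Adj x v) ∧
  (∀ T, S ⊆ T → T ⊆ C → (G.induce T).Connected →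
    (∀ v ∈ T, (G.neighborSet v ∩ T).ncard = 2 → ¬ G.Adj x v) → T = S)

/-- The interior of a sector of a wheel with center `x`: the sector minus its two
ends (which are spokes, i.e. neighbors of `x`). -/
def sectorInterior {V : Type*} (G : SimpleGraph V) (x : V) (S : Set V) : Set V :=
  S \ G.neighborSet x

/-- The wheel `(C, x)` is a proper wheel in `G`. -/
def IsProperWheel {V : Type*} (G : SimpleGraph V) (C : Set V) (x : V) : Prop :=
  IsWheel G C x ∧ ∀ v, v ∉ C → v ≠ x →
    (∃ S, IsSector G C x S ∧ G.neighborSet v ∩ C ⊆ S) ∧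
    (3 ≤ (G.neighborSet v ∩ C).ncard → G.Adj v x)

/-- The wheel `(C, x)` is a proper wheel in the subgraph of `G` induced by `A`. -/
def IsProperWheelOn {V : Type*} (G : SimpleGraph V) (A : Set V) (C : Set V) (x : V) : Prop :=
  C ⊆ A ∧ x ∈ A ∧ IsWheel G C x ∧
  ∀ v ∈ A, v ∉ C → v ≠ x →
    (∃ S, IsSector G C x S ∧ G.neighborSet v ∩ C ⊆ S) ∧
    (3 ≤ (G.neighborSet v ∩ C).ncard → G.Adj v x)

/-- `p` is an induced path in `G`. -/
def IsInducedPath {V : Type*} {u w : V} (G : SimpleGraph V) (p : G.Walk u w) : Prop :=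
  p.IsPath ∧ ∀ a ∈ p.support, ∀ b ∈ p.support, G.Adj a b → s(a, b) ∈ p.edges

/-- `K` is (the vertex set of) a connected component of the subgraph of `G` induced
by `A`. -/
def IsCompOf {V : Type*} (G : SimpleGraph V) (A : Set V) (K : Set V) : Prop :=
  K ⊆ A ∧ (G.induce K).Connected ∧ ∀ a ∈ K, ∀ b ∈ A, G.Adj a b → b ∈ K

/-- `x` is a non-offensive vertex for the wheel `(C, v)`. -/
def NonOffensive {V : Type*} (G : SimpleGraph V) (C : Set V) (v x : V) : Prop :=
  ∃ S1 S2 : Set V, IsSector G C v S1 ∧ IsSector G C v S2 ∧ S1 ≠ S2 ∧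
    (S1 ∩ S2).Nonempty ∧ G.Adj x v ∧
    (G.neighborSet x ∩ S1).Nonempty ∧ (G.neighborSet x ∩ S2).Nonempty ∧
    G.neighborSet x ∩ C ⊆ S1 ∪ S2 ∧
    ∀ u, u ∉ C → u ≠ v → G.Adj u x → G.neighborSet u ∩ C ⊆ S1 ∪ S2

/-- `x` is an `a`-non-offensive vertex for the wheel `(C, v)`: it is non-offensive,
witnessed by two consecutive sectors meeting exactly in `{a}`. -/
def ANonOffensive {V : Type*} (G : SimpleGraph V) (C : Set V) (v a x : V) : Prop :=
  ∃ S1 S2 : Set V, IsSector G C v S1 ∧ IsSector G C v S2 ∧ S1 ≠ S2 ∧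
    S1 ∩ S2 = {a} ∧ G.Adj x v ∧
    (G.neighborSet x ∩ S1).Nonempty ∧ (G.neighborSet x ∩ S2).Nonempty ∧
    G.neighborSet x ∩ C ⊆ S1 ∪ S2 ∧
    ∀ u, u ∉ C → u ≠ v → G.Adj u x → G.neighborSet u ∩ C ⊆ S1 ∪ S2

/-- The wheel `(C, v)` is `k`-almost proper, witnessed by the spokes `xs 0, …, xs (k-1)`
(no two of which lie in a common sector) and the set `X` of vertices outside the wheel:
the wheel is proper in `G \ X`, and every member of `X` is `xs i`-non-offensive for
some `i`. -/
def IsAlmostProperWheel {V : Type*} (G : SimpleGraph V) (C : Set V) (v : V) (k : ℕ)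
    (xs : Fin k → V) (X : Set V) : Prop :=
  IsWheel G C v ∧
  (∀ i, xs i ∈ G.neighborSet v ∩ C) ∧
  (∀ i j, i ≠ j → ¬ ∃ S, IsSector G C v S ∧ xs i ∈ S ∧ xs j ∈ S) ∧
  (∀ x ∈ X, x ∉ C ∧ x ≠ v) ∧
  (∀ u, u ∉ C → u ≠ v → u ∉ X →
    (∃ S, IsSector G C v S ∧ G.neighborSet u ∩ C ⊆ S) ∧
    (3 ≤ (G.neighborSet u ∩ C).ncard → G.Adj u v)) ∧
  (∀ x ∈ X, ∃ i, ANonOffensive G C v (xs i) x)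

/-- The induced subgraph on `S` is a subdivision of `K₁,₃` with `a`, `b`, `c` as its
vertices of degree one (equivalently, a tree whose set of leaves is exactly `{a, b, c}`). -/
def IsK13SubdivisionWithLeaves {V : Type*} (G : SimpleGraph V) (S : Set V) (a b c : V) : Prop :=
  a ∈ S ∧ b ∈ S ∧ c ∈ S ∧ a ≠ b ∧ a ≠ c ∧ b ≠ c ∧
  (G.induce S).Connected ∧ (G.induce S).IsAcyclic ∧
  ∀ v ∈ S, ((G.neighborSet v ∩ S).ncard = 1 ↔ v = a ∨ v = b ∨ v = c)

/-- Adjacency relation of the graph obtained from `G` by contracting the set `K`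
to the single new vertex `none`. -/
def contractAdj {V : Type*} (G : SimpleGraph V) (K : Set V) :
    Option {v : V // v ∉ K} → Option {v : V // v ∉ K} → Prop
  | some a, some b => G.Adj a.1 b.1
  | some a, none => ∃ k ∈ K, G.Adj a.1 k
  | none, some b => ∃ k ∈ K, G.Adj k b.1
  | none, none => False

/-- The graph obtained from `G` by contracting `K` to the single new vertex `none`
(deleting arising loops and parallel edges). -/
def contractSet {V : Type*} (G : SimpleGraph V) (K : Set V) :
    SimpleGraph (Option {v : V // v ∉ K}) where
  Adj := contractAdj G K
  symm := by
    constructor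
    intro a b h
    match a, b, h with
    | none, none, h => exact False.elim h
    | none, some b, ⟨k, hk, ha⟩ => exact ⟨k, hk, ha.symm⟩
    | some a, none, ⟨k, hk, ha⟩ => exact ⟨k, hk, ha.symm⟩
    | some a, some b, h => exact G.adj_symm h
  loopless := by
    constructor
    rintro (_ | a) h
    · exact False.elim h
    · exact G.loopless.irrefl a.1 h

section Aux
variable {V : Type*} {G : SimpleGraph V}


lemma firstEdge {u v y : V} {p : G.Walk u v} (hp : p.IsPath) (h : s(u, y) ∈ p.edges) :
    y = p.getVert 1 := by
  cases p with
  | nil => simp at h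
  | cons h' q =>
    rw [Walk.edges_cons, List.mem_cons] at h
    rcases h with h | h
    · rw [Sym2.eq_iff] at h
      rcases h with ⟨-, rfl⟩ | ⟨h1, h2⟩
      · simp [Walk.getVert_cons_succ, Walk.getVert_zero]
      · exact absurd h1 h'.ne
    · exact absurd (Walk.fst_mem_support_of_mem_edges q h)
        ((Walk.cons_isPath_iff h' q).mp hp).2

lemma lastEdge {u v y : V} {p : G.Walk u v} (hp : p.IsPath) (h : s(v, y) ∈ p.edges) :
    y = p.reverse.getVert 1 := by
  apply firstEdge hp.reverse
  rw [Walk.edges_reverse, List.mem_reverse]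
  exact h



def toInduce {s : Set V} : ∀ {u v : V} (p : G.Walk u v) (hu : u ∈ s) (hv : v ∈ s)
    (_ : ∀ y ∈ p.support, y ∈ s), (G.induce s).Walk ⟨u, hu⟩ ⟨v, hv⟩
  | _, _, Walk.nil, _, _, _ => Walk.nil
  | _, _, Walk.cons h q, hu, hv, hs =>
    Walk.cons (by exact h)
      (toInduce q (hs _ (by simp)) hv (fun y hy => hs y (by simp [hy])))

lemma toInduce_map {s : Set V} : ∀ {u v : V} (p : G.Walk u v) (hu : u ∈ s) (hv : v ∈ s)
    (hs : ∀ y ∈ p.support, y ∈ s),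
    (toInduce p hu hv hs).map (Embedding.induce s).toHom = p
  | _, _, Walk.nil, _, _, _ => rfl
  | _, _, Walk.cons h q, hu, hv, hs => by
    simp only [toInduce, Walk.map_cons]
    exact congrArg (Walk.cons h) (toInduce_map q (hs _ (by simp)) hv (fun y hy => hs y (by simp [hy])))

lemma pathUnique {s : Set V} (hac : (G.induce s).IsAcyclic) {u v : V}
    (p q : G.Walk u v) (hp : p.IsPath) (hq : q.IsPath)
    (hps : ∀ y ∈ p.support, y ∈ s) (hqs : ∀ y ∈ q.support, y ∈ s) : p = q := by
  have hu : u ∈ s := hps u p.start_mem_support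
  have hv : v ∈ s := hps v p.end_mem_support
  have hp' : (toInduce p hu hv hps).IsPath := by
    apply Walk.IsPath.of_map (f := (Embedding.induce s).toHom)
    rw [toInduce_map]; exact hp
  have hq' : (toInduce q hu hv hqs).IsPath := by
    apply Walk.IsPath.of_map (f := (Embedding.induce s).toHom)
    rw [toInduce_map]; exact hq
  have := hac.path_unique ⟨toInduce p hu hv hps, hp'⟩ ⟨toInduce q hu hv hqs, hq'⟩
  have h2 := congrArg (fun (r : (G.induce s).Path ⟨u, hu⟩ ⟨v, hv⟩) =>
    (r : (G.induce s).Walk ⟨u, hu⟩ ⟨v, hv⟩).map (Embedding.induce s).toHom) this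
  simpa [toInduce_map] using h2

lemma edge_of_path {s : Set V} (hac : (G.induce s).IsAcyclic) {a b : V}
    (r : G.Walk a b) (hr : r.IsPath) (hrs : ∀ y ∈ r.support, y ∈ s)
    (hab : G.Adj a b) : s(a, b) ∈ r.edges := by
  have hr2 : (Walk.cons hab Walk.nil : G.Walk a b).IsPath := by simp [hab.ne]
  have := pathUnique hac r (Walk.cons hab Walk.nil) hr hr2 hrs
    (by intro y hy
        simp only [Walk.support_cons, Walk.support_nil, List.mem_cons,
          List.not_mem_nil, or_false] at hy
        rcases hy with rfl | rfl
        · exact hrs _ r.start_mem_support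
        · exact hrs _ r.end_mem_support)
  rw [this]; simp

lemma chord [DecidableEq V] {s : Set V} (hac : (G.induce s).IsAcyclic) {u v a b : V}
    {p : G.Walk u v} (hp : p.IsPath) (hps : ∀ y ∈ p.support, y ∈ s)
    (ha : a ∈ p.support) (hb : b ∈ p.support) (hab : G.Adj a b) : s(a, b) ∈ p.edges := by
  rw [← p.take_spec ha, Walk.mem_support_append_iff] at hb
  rcases hb with hb | hb
  · have hseg : (((p.takeUntil a ha)).dropUntil b hb).IsPath := (hp.takeUntil ha).dropUntil hb
    have hmem := edge_of_path hac _ hseg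
      (fun y hy => hps y ((p.support_takeUntil_subset ha)
        ((Walk.support_dropUntil_subset _ hb) hy))) hab.symm
    have : s(b, a) ∈ p.edges :=
      (p.edges_takeUntil_subset ha) ((Walk.edges_dropUntil_subset _ hb) hmem)
    rwa [Sym2.eq_swap] at this
  · have hseg : ((p.dropUntil a ha).takeUntil b hb).IsPath := (hp.dropUntil ha).takeUntil hb
    have hmem := edge_of_path hac _ hseg
      (fun y hy => hps y ((p.support_dropUntil_subset ha)
        ((Walk.support_takeUntil_subset _ hb) hy))) hab
    exact (p.edges_dropUntil_subset ha) ((Walk.edges_takeUntil_subset _ hb) hmem)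



lemma getVert_one_mem_support {u v : V} (p : G.Walk u v) (h : ¬ p.Nil) :
    p.getVert 1 ∈ p.support := by
  rw [Walk.mem_support_iff_exists_getVert]
  refine ⟨1, rfl, ?_⟩
  rw [Walk.not_nil_iff_lt_length] at h
  omega

lemma getVert_one_mem_tail_support {u v : V} (p : G.Walk u v) (h : ¬ p.Nil) :
    p.getVert 1 ∈ p.support.tail := by
  cases p with
  | nil => exact absurd (by simp) h
  | cons h' q => simpa using q.start_mem_support

lemma interior_two_nbrs [DecidableEq V] {u v y : V} {p : G.Walk u v} (hp : p.IsPath)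
    (hy : y ∈ p.support) (hyu : y ≠ u) (hyv : y ≠ v) :
    ∃ y1 y2, y1 ≠ y2 ∧ y1 ∈ p.support ∧ y2 ∈ p.support ∧ G.Adj y y1 ∧ G.Adj y y2 := by
  set r1 := p.takeUntil y hy with hr1
  set r2 := p.dropUntil y hy with hr2
  have hn1 : ¬ r1.reverse.Nil := Walk.not_nil_of_ne hyu
  have hn2 : ¬ r2.Nil := Walk.not_nil_of_ne hyv
  refine ⟨r1.reverse.getVert 1, r2.getVert 1, ?_, ?_, ?_, ?_, ?_⟩
  · -- distinctness via nodup of p.support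
    intro heq
    have hsplit : p.support = r1.support ++ r2.support.tail := by
      rw [← Walk.support_append, p.take_spec hy]
    have hnd : (r1.support ++ r2.support.tail).Nodup := by
      rw [← hsplit]; exact hp.support_nodup
    have h1 : r1.reverse.getVert 1 ∈ r1.support := by
      have := getVert_one_mem_support r1.reverse hn1
      rwa [Walk.support_reverse, List.mem_reverse] at this
    have h2 : r2.getVert 1 ∈ r2.support.tail := getVert_one_mem_tail_support r2 hn2
    exact (List.disjoint_of_nodup_append hnd) h1 (heq ▸ h2)
  · exact (p.support_takeUntil_subset hy) (by
      have := getVert_one_mem_support r1.reverse hn1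
      rwa [Walk.support_reverse, List.mem_reverse] at this)
  · exact (p.support_dropUntil_subset hy) (getVert_one_mem_support r2 hn2)
  · exact Walk.adj_snd hn1
  · exact Walk.adj_snd hn2



lemma exists_leaf [Fintype V] [DecidableEq V] [DecidableRel G.Adj] {x : V}
    (hforest : (G.induce ({x}ᶜ : Set V)).IsAcyclic) (S : Finset V) (hx : x ∉ S)
    (hconn : ∀ u ∈ S, ∀ v ∈ S, ∃ p : G.Walk u v, ∀ y ∈ p.support, y ∈ S)
    (hcard : 2 ≤ S.card) :
    ∃ a a', a ∈ S ∧ G.neighborFinset a ∩ S = {a'} := by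
  classical
  set P : ℕ → Prop := fun n => ∃ (u v : V) (p : G.Walk u v), p.IsPath ∧
    (∀ y ∈ p.support, y ∈ S) ∧ p.length = n with hP
  obtain ⟨u0, hu0, v0, hv0, huv0⟩ := Finset.one_lt_card.mp hcard
  obtain ⟨r, hr⟩ := hconn u0 hu0 v0 hv0
  have hP0 : P r.bypass.length :=
    ⟨u0, v0, r.bypass, r.bypass_isPath, fun y hy => hr y (r.support_bypass_subset hy), rfl⟩
  have h1len : 1 ≤ r.bypass.length := by
    rcases Nat.eq_zero_or_pos r.bypass.length with h | h
    · exact absurd (Walk.eq_of_length_eq_zero h) huv0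
    · exact h
  set B := Fintype.card V with hB
  set N := Nat.findGreatest P B with hN
  have hPN : P N := Nat.findGreatest_spec (le_of_lt r.bypass_isPath.length_lt) hP0
  have hN1 : 1 ≤ N := le_trans h1len
    (Nat.le_findGreatest (le_of_lt r.bypass_isPath.length_lt) hP0)
  obtain ⟨u, v, p, hp, hps, hlen⟩ := hPN
  have hnn : ¬ p.Nil := by rw [Walk.not_nil_iff_lt_length]; omega
  have hSx : ∀ y ∈ p.support, y ∈ ({x}ᶜ : Set V) := fun y hy =>
    fun hc => hx (by rw [← Set.mem_singleton_iff.mp hc]; exact hps y hy)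
  refine ⟨u, p.getVert 1, hps u p.start_mem_support, ?_⟩
  ext y
  simp only [Finset.mem_inter, mem_neighborFinset, Finset.mem_singleton]
  constructor
  · rintro ⟨hadj, hyS⟩
    by_cases hmem : y ∈ p.support
    · exact firstEdge hp (chord hforest hp hSx p.start_mem_support hmem hadj)
    · exfalso
      have hq : (Walk.cons hadj.symm p).IsPath := (Walk.cons_isPath_iff _ _).mpr ⟨hp, hmem⟩
      have hPq : P (Walk.cons hadj.symm p).length :=
        ⟨y, v, Walk.cons hadj.symm p, hq,
          by intro z hz
             rw [Walk.support_cons, List.mem_cons] at hz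
             rcases hz with rfl | hz
             · exact hyS
             · exact hps z hz, rfl⟩
      have := Nat.le_findGreatest (le_of_lt hq.length_lt) hPq
      rw [Walk.length_cons, hlen, ← hN] at this
      omega
  · rintro rfl
    exact ⟨Walk.adj_snd hnn, hps _ (getVert_one_mem_support p hnn)⟩

lemma pendant [Fintype V] [DecidableEq V] [DecidableRel G.Adj] {x : V}
    (hforest : (G.induce ({x}ᶜ : Set V)).IsAcyclic) (S : Finset V) (hx : x ∉ S)
    (hleaf : ∀ v ∈ S, (G.neighborFinset v ∩ S).card ≤ 1 → G.Adj x v)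
    {a a' : V} (ha : a ∈ S) (hnb : G.neighborFinset a ∩ S = {a'}) :
    ∃ (c : V) (q : G.Walk a c), q.IsPath ∧ 1 ≤ q.length ∧ (∀ y ∈ q.support, y ∈ S) ∧
      c ≠ a ∧
      (∀ v ∈ q.support, v ≠ a → v ≠ c → ¬ G.Adj x v ∧ (G.neighborFinset v ∩ S).card = 2) ∧
      (G.Adj x c ∨ (3 ≤ (G.neighborFinset c ∩ S).card ∧ ¬ G.Adj x c)) ∧
      (∀ y ∈ q.support, G.Adj c y → y = q.reverse.getVert 1) := by
  classical
  have key : ∀ (n : ℕ) (u : V) (q : G.Walk a u), q.IsPath → 1 ≤ q.length →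
      (∀ y ∈ q.support, y ∈ S) → u ≠ a →
      (∀ v ∈ q.support, v ≠ a → v ≠ u → ¬ G.Adj x v ∧ (G.neighborFinset v ∩ S).card = 2) →
      S.card ≤ q.length + n →
      ∃ (c : V) (q : G.Walk a c), q.IsPath ∧ 1 ≤ q.length ∧ (∀ y ∈ q.support, y ∈ S) ∧
      c ≠ a ∧
      (∀ v ∈ q.support, v ≠ a → v ≠ c → ¬ G.Adj x v ∧ (G.neighborFinset v ∩ S).card = 2) ∧
      (G.Adj x c ∨ (3 ≤ (G.neighborFinset c ∩ S).card ∧ ¬ G.Adj x c)) ∧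
      (∀ y ∈ q.support, G.Adj c y → y = q.reverse.getVert 1) := by
    intro n
    induction n with
    | zero =>
      intro u q hq _ hqs _ _ hfuel
      exfalso
      have h1 : q.support.toFinset.card = q.length + 1 := by
        rw [List.toFinset_card_of_nodup hq.support_nodup, Walk.length_support]
      have h2 : q.support.toFinset ⊆ S := fun y hy => hqs y (List.mem_toFinset.mp hy)
      have := Finset.card_le_card h2
      omega
    | succ n ih =>
      intro u q hq hlen hqs hua hint hfuel
      have hqsx : ∀ y ∈ q.support, y ∈ ({x}ᶜ : Set V) := fun y hy hc =>
        hx (by rw [← Set.mem_singleton_iff.mp hc]; exact hqs y hy)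
      have huniq : ∀ y ∈ q.support, G.Adj u y → y = q.reverse.getVert 1 := fun y hy hadj =>
        lastEdge hq (chord hforest hq hqsx q.end_mem_support hy hadj)
      by_cases hxc : G.Adj x u
      · exact ⟨u, q, hq, hlen, hqs, hua, hint, Or.inl hxc, huniq⟩
      by_cases hdeg3 : 3 ≤ (G.neighborFinset u ∩ S).card
      · exact ⟨u, q, hq, hlen, hqs, hua, hint, Or.inr ⟨hdeg3, hxc⟩, huniq⟩
      have hcard2 : (G.neighborFinset u ∩ S).card = 2 := by
        rcases Nat.lt_or_ge (G.neighborFinset u ∩ S).card 2 with h | h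
        · exact absurd (hleaf u (hqs u q.end_mem_support) (by omega)) hxc
        · omega
      have hnnrev : ¬ q.reverse.Nil := Walk.not_nil_of_ne hua
      set prev := q.reverse.getVert 1 with hprev
      have hprevmem : prev ∈ q.support := by
        have := getVert_one_mem_support q.reverse hnnrev
        rwa [Walk.support_reverse, List.mem_reverse] at this
      have hprevadj : G.Adj u prev := Walk.adj_snd hnnrev
      have hprevin : prev ∈ G.neighborFinset u ∩ S :=
        Finset.mem_inter.mpr ⟨(mem_neighborFinset G u prev).mpr hprevadj, hqs _ hprevmem⟩
      obtain ⟨e1, e2, hne, hset⟩ := Finset.card_eq_two.mp hcard2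
      have hz : ∃ z, z ∈ G.neighborFinset u ∩ S ∧ z ≠ prev := by
        rw [hset] at hprevin ⊢
        simp only [Finset.mem_insert, Finset.mem_singleton] at hprevin
        rcases hprevin with rfl | rfl
        · exact ⟨e2, by simp, Ne.symm hne⟩
        · exact ⟨e1, by simp, hne⟩
      obtain ⟨z, hzin, hzprev⟩ := hz
      rw [Finset.mem_inter, mem_neighborFinset] at hzin
      obtain ⟨hzadj, hzS⟩ := hzin
      have hznsup : z ∉ q.support := fun hzs => hzprev (huniq z hzs hzadj)
      set q' := q.append (Walk.cons hzadj Walk.nil) with hq'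
      have hq'sup : q'.support = q.support ++ [z] := by
        rw [hq', Walk.support_append, Walk.support_cons, Walk.support_nil]
        rfl
      have hq'path : q'.IsPath := by
        rw [Walk.isPath_def, hq'sup]
        rw [List.nodup_append]
        exact ⟨hq.support_nodup, List.nodup_singleton z,
          fun y hy w hyz hyw => by subst hyw; exact hznsup ((List.mem_singleton.mp hyz) ▸ hy)⟩
      have hq'len : q'.length = q.length + 1 := by
        rw [hq', Walk.length_append, Walk.length_cons, Walk.length_nil]
      apply ih z q' hq'path (by omega)
      · intro y hy
        rw [hq'sup, List.mem_append, List.mem_singleton] at hy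
        rcases hy with hy | rfl
        · exact hqs y hy
        · exact hzS
      · intro hza; exact hznsup (by rw [hza]; exact q.start_mem_support)
      · intro v hv hvna hvnz
        rw [hq'sup, List.mem_append, List.mem_singleton] at hv
        rcases hv with hv | rfl
        · by_cases hvu : v = u
          · exact hvu ▸ ⟨hxc, hcard2⟩
          · exact hint v hv hvna hvu
        · exact absurd rfl hvnz
      · omega
  have h0adj : G.Adj a a' := by
    have : a' ∈ G.neighborFinset a ∩ S := by rw [hnb]; simp
    exact (mem_neighborFinset G a a').mp (Finset.mem_inter.mp this).1
  have ha'S : a' ∈ S := by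
    have : a' ∈ G.neighborFinset a ∩ S := by rw [hnb]; simp
    exact (Finset.mem_inter.mp this).2
  apply key S.card a' (Walk.cons h0adj Walk.nil) (by simp [h0adj.ne]) (by simp)
  · intro y hy
    simp only [Walk.support_cons, Walk.support_nil, List.mem_cons, List.not_mem_nil,
      or_false, List.mem_singleton] at hy
    rcases hy with rfl | rfl
    · exact ha
    · exact ha'S
  · exact h0adj.ne'
  · intro v hv hvna hvna'
    simp only [Walk.support_cons, Walk.support_nil, List.mem_cons, List.not_mem_nil,
      or_false, List.mem_singleton] at hv
    rcases hv with rfl | rfl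
    · exact absurd rfl hvna
    · exact absurd rfl hvna'
  · simp

lemma IsPath.getVert_inj {u v : V} {q : G.Walk u v} (h : q.IsPath) :
    ∀ {i j : ℕ}, i ≤ q.length → j ≤ q.length → q.getVert i = q.getVert j → i = j := by
  induction q with
  | nil => intro i j hi hj _; simp at hi hj; omega
  | cons h' t ih =>
    intro i j hi hj hij
    rw [Walk.cons_isPath_iff] at h
    match i, j with
    | 0, 0 => rfl
    | 0, (j+1) =>
      exfalso
      rw [Walk.getVert_zero, Walk.getVert_cons_succ] at hij
      exact h.2 (Walk.mem_support_iff_exists_getVert.mpr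
        ⟨j, hij.symm, by simpa using hj⟩)
    | (i+1), 0 =>
      exfalso
      rw [Walk.getVert_zero, Walk.getVert_cons_succ] at hij
      exact h.2 (Walk.mem_support_iff_exists_getVert.mpr
        ⟨i, hij, by simpa using hi⟩)
    | (i+1), (j+1) =>
      rw [Walk.getVert_cons_succ, Walk.getVert_cons_succ] at hij
      have := ih h.1 (by simpa using hi) (by simpa using hj) hij
      omega

variable [Fintype V] [DecidableEq V]

def MainConc (G : SimpleGraph V) [DecidableRel G.Adj] (x : V) (S : Finset V) : Prop :=
  ∃ (a b : V) (p : G.Walk a b), p.IsPath ∧ 1 ≤ p.length ∧ (∀ y ∈ p.support, y ∈ S) ∧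
    G.Adj x a ∧ G.Adj x b ∧ (∀ v ∈ p.support, v ≠ a → v ≠ b → ¬ G.Adj x v) ∧
    ∃ w : V, (a ≠ w → (G.neighborFinset a ∩ S).card = 1) ∧
      (b ≠ w → (G.neighborFinset b ∩ S).card = 1) ∧
      ∀ v ∈ p.support, v ≠ a → v ≠ b → v ≠ w → (G.neighborFinset v ∩ S).card = 2

lemma mainLemma [DecidableRel G.Adj] {x : V}
    (hforest : (G.induce ({x}ᶜ : Set V)).IsAcyclic) :
    ∀ (n : ℕ) (S : Finset V), S.card ≤ n → x ∉ S →
      (∀ u ∈ S, ∀ v ∈ S, ∃ p : G.Walk u v, ∀ y ∈ p.support, y ∈ S) → 2 ≤ S.card →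
      (∀ v ∈ S, (G.neighborFinset v ∩ S).card ≤ 1 → G.Adj x v) →
      MainConc G x S := by
  intro n
  induction n with
  | zero => intro S h1 _ _ h2 _; omega
  | succ n ih =>
    intro S hSn hx hconn hcard hleaf
    obtain ⟨a, a', ha, hnb⟩ := exists_leaf hforest S hx hconn hcard
    obtain ⟨c, q, hq, hqlen, hqs, hca, hqint, hstop, huniq⟩ :=
      pendant hforest S hx hleaf ha hnb
    have haM : G.Adj x a := hleaf a ha (by rw [hnb]; simp)
    have hcS : c ∈ S := hqs c q.end_mem_support
    have hxS : ∀ y ∈ S, y ≠ x := fun y hy hc => hx (hc ▸ hy)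
    rcases hstop with hxc | ⟨hc3, hxc⟩
    · refine ⟨a, c, q, hq, hqlen, hqs, haM, hxc,
        (fun v hv hva hvc => (hqint v hv hva hvc).1), c,
        fun _ => by rw [hnb]; simp, fun hcc => absurd rfl hcc,
        fun v hv hva hvc _ => (hqint v hv hva hvc).2⟩
    · -- strip the pendant path
      set prev := q.reverse.getVert 1 with hprevdef
      have hnnrev : ¬ q.reverse.Nil := Walk.not_nil_of_ne hca
      have hprevmem : prev ∈ q.support := by
        have := getVert_one_mem_support q.reverse hnnrev
        rwa [Walk.support_reverse, List.mem_reverse] at this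
      have hprevadj : G.Adj c prev := Walk.adj_snd hnnrev
      set D := q.support.toFinset.erase c with hD
      have hDmem : ∀ y, y ∈ D ↔ y ∈ q.support ∧ y ≠ c := by
        intro y; rw [hD, Finset.mem_erase, List.mem_toFinset]; tauto
      set S' := S \ D with hS'
      have hS'mem : ∀ y, y ∈ S' ↔ y ∈ S ∧ (y ∉ q.support ∨ y = c) := by
        intro y; rw [hS', Finset.mem_sdiff, hDmem]; tauto
      have hcS' : c ∈ S' := (hS'mem c).mpr ⟨hcS, Or.inr rfl⟩
      have hxS' : x ∉ S' := fun h => hx (Finset.mem_sdiff.mp h).1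
      have hS'S : S' ⊆ S := Finset.sdiff_subset
      -- the second vertex of q is a'
      have hqnn : ¬ q.Nil := by rw [Walk.not_nil_iff_lt_length]; omega
      have ha' : q.getVert 1 = a' := by
        have h1 : q.getVert 1 ∈ G.neighborFinset a ∩ S :=
          Finset.mem_inter.mpr ⟨(mem_neighborFinset _ _ _).mpr (Walk.adj_snd hqnn),
            hqs _ (getVert_one_mem_support q hqnn)⟩
        rw [hnb] at h1; exact Finset.mem_singleton.mp h1
      -- (g2): degrees unchanged away from c
      have g2 : ∀ v ∈ S', v ≠ c → G.neighborFinset v ∩ S' = G.neighborFinset v ∩ S := by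
        intro v hv hvc
        apply Finset.Subset.antisymm
        · exact Finset.inter_subset_inter (le_refl _) hS'S
        · intro y hy
          rw [Finset.mem_inter] at hy
          rw [Finset.mem_inter, hS'mem]
          refine ⟨hy.1, hy.2, ?_⟩
          by_contra hcon
          push_neg at hcon
          obtain ⟨hyq, hyc⟩ := hcon
          -- y is on the pendant path, y ≠ c; derive v ∈ q.support, contradiction
          have hvy : v ∈ G.neighborFinset y ∩ S := Finset.mem_inter.mpr
            ⟨(mem_neighborFinset _ _ _).mpr ((mem_neighborFinset _ _ _).mp hy.1).symm,
             hS'S hv⟩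
          have hvsup : v ∈ q.support := by
            by_cases hya : y = a
            · subst hya
              rw [hnb] at hvy
              rw [Finset.mem_singleton.mp hvy, ← ha']
              exact getVert_one_mem_support q hqnn
            · obtain ⟨y1, y2, h12, hy1, hy2, hay1, hay2⟩ :=
                interior_two_nbrs hq hyq hya hyc
              have hsub : {y1, y2} ⊆ G.neighborFinset y ∩ S := by
                intro z hz
                rcases Finset.mem_insert.mp hz with rfl | hz
                · exact Finset.mem_inter.mpr ⟨(mem_neighborFinset _ _ _).mpr hay1, hqs _ hy1⟩
                · rw [Finset.mem_singleton.mp hz]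
                  exact Finset.mem_inter.mpr ⟨(mem_neighborFinset _ _ _).mpr hay2, hqs _ hy2⟩
              have hcard12 : ({y1, y2} : Finset V).card = 2 := Finset.card_pair h12
              have heq := Finset.eq_of_subset_of_card_le hsub
                (by rw [hcard12, (hqint y hyq hya hyc).2])
              have : v ∈ ({y1, y2} : Finset V) := heq.symm ▸ hvy
              rcases Finset.mem_insert.mp this with rfl | h
              · exact hy1
              · rw [Finset.mem_singleton.mp h]; exact hy2
          have : v ∈ D := (hDmem v).mpr ⟨hvsup, hvc⟩
          exact absurd hv (by rw [hS']; simp [this, Finset.mem_sdiff])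
      -- (g3): the neighborhood of c in S'
      have g3 : G.neighborFinset c ∩ S' = (G.neighborFinset c ∩ S) \ {prev} := by
        ext y
        rw [Finset.mem_sdiff, Finset.mem_inter, Finset.mem_inter, hS'mem, Finset.mem_singleton]
        constructor
        · rintro ⟨hadj, hyS, hyq⟩
          refine ⟨⟨hadj, hyS⟩, ?_⟩
          rcases hyq with hyq | hyc
          · exact fun h => hyq (h ▸ hprevmem)
          · exact absurd ((mem_neighborFinset _ _ _).mp (hyc ▸ hadj)) (G.loopless.irrefl c)
        · rintro ⟨⟨hadj, hyS⟩, hyprev⟩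
          refine ⟨hadj, hyS, ?_⟩
          by_cases hyq : y ∈ q.support
          · exact absurd (huniq y hyq ((mem_neighborFinset _ _ _).mp hadj)) hyprev
          · exact Or.inl hyq
      have hprevin : prev ∈ G.neighborFinset c ∩ S :=
        Finset.mem_inter.mpr ⟨(mem_neighborFinset _ _ _).mpr hprevadj, hqs _ hprevmem⟩
      have g3card : 2 ≤ (G.neighborFinset c ∩ S').card := by
        rw [g3, Finset.card_sdiff_of_subset (Finset.singleton_subset_iff.mpr hprevin)]
        simp only [Finset.card_singleton]
        omega
      -- (g4): S' is connected
      have g4 : ∀ u ∈ S', ∀ v ∈ S', ∃ p : G.Walk u v, ∀ y ∈ p.support, y ∈ S' := by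
        intro u hu v hv
        obtain ⟨r, hr⟩ := hconn u (hS'S hu) v (hS'S hv)
        refine ⟨r.bypass, ?_⟩
        have hrs : ∀ y ∈ r.bypass.support, y ∈ S := fun y hy =>
          hr y (r.support_bypass_subset hy)
        have hrp : r.bypass.IsPath := r.bypass_isPath
        -- claim: no vertex of D is on r.bypass
        by_contra hcon
        push_neg at hcon
        obtain ⟨y₀, hy₀sup, hy₀S'⟩ := hcon
        have hy₀D : y₀ ∈ q.support ∧ y₀ ≠ c := by
          rw [← hDmem]
          by_contra hnD
          exact hy₀S' (Finset.mem_sdiff.mpr ⟨hrs _ hy₀sup, hnD⟩)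
        obtain ⟨i₀, hgv₀, hi₀⟩ := Walk.mem_support_iff_exists_getVert.mp hy₀D.1
        have hJ : ∃ i, i ≤ q.length ∧ q.getVert i ∈ r.bypass.support ∧ q.getVert i ≠ c := by
          exact ⟨i₀, hi₀, by rw [hgv₀]; exact hy₀sup, by rw [hgv₀]; exact hy₀D.2⟩
        classical
        set Jp : ℕ → Prop := fun i => i ≤ q.length ∧ q.getVert i ∈ r.bypass.support ∧
          q.getVert i ≠ c with hJp
        have hJ' : ∃ i, Jp i := hJ
        set i := Nat.find hJ' with hidef
        obtain ⟨hile, himem, hinec⟩ := Nat.find_spec hJ'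
        set y := q.getVert i with hydef
        have hyu : y ≠ u := fun h => by
          rw [← h] at hu
          exact ((hS'mem y).mp hu).2.elim (fun hh => hh (Walk.mem_support_iff_exists_getVert.mpr ⟨i, rfl, hile⟩)) hinec
        have hyv : y ≠ v := fun h => by
          rw [← h] at hv
          exact ((hS'mem y).mp hv).2.elim (fun hh => hh (Walk.mem_support_iff_exists_getVert.mpr ⟨i, rfl, hile⟩)) hinec
        have hymem : y ∈ q.support := Walk.mem_support_iff_exists_getVert.mpr ⟨i, rfl, hile⟩
        obtain ⟨y1, y2, h12, hy1, hy2, hay1, hay2⟩ :=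
          interior_two_nbrs hrp himem hyu hyv
        by_cases hi0 : i = 0
        · -- y = a, but a has only one neighbor in S, contradiction with two
          have hya : y = a := by rw [hydef, hi0, Walk.getVert_zero]
          have h1 : y1 ∈ G.neighborFinset a ∩ S := Finset.mem_inter.mpr
            ⟨(mem_neighborFinset _ _ _).mpr (hya ▸ hay1), hrs _ hy1⟩
          have h2 : y2 ∈ G.neighborFinset a ∩ S := Finset.mem_inter.mpr
            ⟨(mem_neighborFinset _ _ _).mpr (hya ▸ hay2), hrs _ hy2⟩
          rw [hnb, Finset.mem_singleton] at h1 h2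
          exact h12 (h1.trans h2.symm)
        · -- y is interior of q; its S-neighbors are exactly getVert (i-1), getVert (i+1)
          have hilt : i < q.length := by
            rcases Nat.lt_or_ge i q.length with h | h
            · exact h
            · exfalso
              have : i = q.length := le_antisymm hile h
              exact hinec (by rw [hydef, this, Walk.getVert_length])
          have hya : y ≠ a := by
            intro h
            have : i = 0 := IsPath.getVert_inj hq hile (by omega)
              (by rw [← hydef, h, Walk.getVert_zero])
            exact hi0 this
          have hcard2 : (G.neighborFinset y ∩ S).card = 2 := (hqint y hymem hya hinec).2
          have hpm : ({q.getVert (i-1), q.getVert (i+1)} : Finset V) ⊆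
              G.neighborFinset y ∩ S := by
            intro z hz
            rcases Finset.mem_insert.mp hz with rfl | hz
            · refine Finset.mem_inter.mpr ⟨(mem_neighborFinset _ _ _).mpr ?_,
                hqs _ (Walk.mem_support_iff_exists_getVert.mpr ⟨i-1, rfl, by omega⟩)⟩
              have := q.adj_getVert_succ (i := i - 1) (by omega)
              have hii : i - 1 + 1 = i := by omega
              rw [hii] at this
              exact this.symm
            · rw [Finset.mem_singleton.mp hz]
              refine Finset.mem_inter.mpr ⟨(mem_neighborFinset _ _ _).mpr ?_,
                hqs _ (Walk.mem_support_iff_exists_getVert.mpr ⟨i+1, rfl, by omega⟩)⟩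
              exact q.adj_getVert_succ hilt
          have hpmcard : ({q.getVert (i-1), q.getVert (i+1)} : Finset V).card = 2 := by
            rw [Finset.card_pair]
            intro h
            have := IsPath.getVert_inj hq (by omega : i - 1 ≤ q.length)
              (by omega : i + 1 ≤ q.length) h
            omega
          have heq := Finset.eq_of_subset_of_card_le hpm (by rw [hpmcard, hcard2])
          -- y1 and y2 are in the pair, so getVert (i-1) ∈ r.bypass.support
          have hy1in : y1 ∈ ({q.getVert (i-1), q.getVert (i+1)} : Finset V) := by
            rw [heq]
            exact Finset.mem_inter.mpr ⟨(mem_neighborFinset _ _ _).mpr hay1, hrs _ hy1⟩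
          have hy2in : y2 ∈ ({q.getVert (i-1), q.getVert (i+1)} : Finset V) := by
            rw [heq]
            exact Finset.mem_inter.mpr ⟨(mem_neighborFinset _ _ _).mpr hay2, hrs _ hy2⟩
          have hprev_in_r : q.getVert (i-1) ∈ r.bypass.support := by
            rcases Finset.mem_insert.mp hy1in with h1 | h1
            · rw [← h1]; exact hy1
            · rcases Finset.mem_insert.mp hy2in with h2 | h2
              · rw [← h2]; exact hy2
              · exfalso
                rw [Finset.mem_singleton] at h1 h2
                exact h12 (h1.trans h2.symm)
          -- getVert (i-1) could be c only if i-1 = length, impossible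
          have hprevnec : q.getVert (i-1) ≠ c := by
            intro h
            have : i - 1 = q.length := IsPath.getVert_inj hq (by omega) (le_refl _)
              (by rw [h, Walk.getVert_length])
            omega
          have : i ≤ i - 1 := Nat.find_min' hJ' ⟨by omega, hprev_in_r, hprevnec⟩
          omega
      -- (g5): leaves of S' are adjacent to x
      have g5 : ∀ v ∈ S', (G.neighborFinset v ∩ S').card ≤ 1 → G.Adj x v := by
        intro v hv hc
        by_cases hvc : v = c
        · subst hvc; omega
        · rw [g2 v hv hvc] at hc
          exact hleaf v (hS'S hv) hc
      -- (g6): S' has at least two elements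
      have g6 : 2 ≤ S'.card := by
        have hne : (G.neighborFinset c ∩ S').Nonempty := by
          rw [← Finset.card_pos]; omega
        obtain ⟨z, hz⟩ := hne
        rw [Finset.mem_inter, mem_neighborFinset] at hz
        have : z ≠ c := hz.1.ne'
        exact Finset.one_lt_card.mpr ⟨z, hz.2, c, hcS', this⟩
      -- (g7): S' is smaller
      have g7 : S'.card ≤ n := by
        have haD : a ∈ D := (hDmem a).mpr ⟨q.start_mem_support, fun h => hca h.symm⟩
        have hss : S' ⊂ S := Finset.ssubset_iff_of_subset hS'S |>.mpr
          ⟨a, ha, fun h => ((hS'mem a).mp h).2.elim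
            (fun hh => hh q.start_mem_support) (fun hh => hca hh.symm)⟩
        have := Finset.card_lt_card hss
        omega
      obtain ⟨a₂, b₂, p₂, hp₂, hp₂len, hp₂s, hxa₂, hxb₂, hp₂int, w₂, hwa₂, hwb₂, hwint⟩ :=
        ih S' g7 hxS' g4 g6 g5
      by_cases hcp : c ∈ p₂.support
      case neg =>
        -- Case A: reuse p₂
        refine ⟨a₂, b₂, p₂, hp₂, hp₂len, fun y hy => hS'S (hp₂s y hy), hxa₂, hxb₂, hp₂int,
          w₂, ?_, ?_, ?_⟩
        · intro h
          rw [← g2 a₂ (hp₂s _ p₂.start_mem_support)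
            (fun hh => hcp (hh ▸ p₂.start_mem_support))]
          exact hwa₂ h
        · intro h
          rw [← g2 b₂ (hp₂s _ p₂.end_mem_support)
            (fun hh => hcp (hh ▸ p₂.end_mem_support))]
          exact hwb₂ h
        · intro v hv hva hvb hvw
          rw [← g2 v (hp₂s v hv) (fun hh => hcp (hh ▸ hv))]
          exact hwint v hv hva hvb hvw
      case pos =>
        -- Case B: reroute through the pendant path
        have hca₂ : c ≠ a₂ := fun h => hxc (by rw [h]; exact hxa₂)
        have hcb₂ : c ≠ b₂ := fun h => hxc (by rw [h]; exact hxb₂)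
        -- a common "finish" step
        have finish : ∀ (m : V) (s : G.Walk m c), s.IsPath →
            (∀ y ∈ s.support, y ∈ S') → G.Adj x m →
            (G.neighborFinset m ∩ S).card = 1 →
            (∀ y ∈ s.support, y ≠ m → y ≠ c → ¬ G.Adj x y ∧
              (G.neighborFinset y ∩ S).card = 2) →
            MainConc G x S := by
          intro m s hs1 hs2 hs3 hs4 hs6
          have hqrev : q.reverse.support = c :: q.reverse.support.tail :=
            q.reverse.support_eq_cons
          have hrevnodup : q.reverse.support.Nodup := hq.reverse.support_nodup
          have hcnt : c ∉ q.reverse.support.tail := by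
            rw [hqrev] at hrevnodup
            exact (List.nodup_cons.mp hrevnodup).1
          have htail : ∀ y ∈ q.reverse.support.tail, y ∈ q.support ∧ y ≠ c := by
            intro y hy
            constructor
            · have : y ∈ q.reverse.support := by rw [hqrev]; exact List.mem_cons_of_mem _ hy
              rwa [Walk.support_reverse, List.mem_reverse] at this
            · exact fun h => hcnt (h ▸ hy)
          set p := s.append q.reverse with hpdef
          have hpsup : p.support = s.support ++ q.reverse.support.tail :=
            Walk.support_append s q.reverse
          have hpmem : ∀ y, y ∈ p.support ↔ y ∈ s.support ∨ y ∈ q.reverse.support.tail := by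
            intro y; rw [hpsup, List.mem_append]
          have hppath : p.IsPath := by
            rw [Walk.isPath_def, hpsup, List.nodup_append]
            refine ⟨hs1.support_nodup, ?_, ?_⟩
            · rw [hqrev] at hrevnodup
              exact (List.nodup_cons.mp hrevnodup).2
            · intro y hy w hyt hyw
              subst hyw
              obtain ⟨hyq, hyc⟩ := htail y hyt
              have := (hS'mem y).mp (hs2 y hy)
              rcases this.2 with h | h
              · exact h hyq
              · exact hyc h
          have hplen : 1 ≤ p.length := by
            rw [hpdef, Walk.length_append, Walk.length_reverse]
            omega
          have hpS : ∀ y ∈ p.support, y ∈ S := by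
            intro y hy
            rcases (hpmem y).mp hy with h | h
            · exact hS'S (hs2 y h)
            · exact hqs y (htail y h).1
          have hma : m ≠ a := by
            intro h
            have := (hS'mem m).mp (hs2 m s.start_mem_support)
            rcases this.2 with hh | hh
            · exact hh (h ▸ q.start_mem_support)
            · exact hca (h ▸ hh).symm
          refine ⟨m, a, p, hppath, hplen, hpS, hs3, haM, ?_, c, ?_, ?_, ?_⟩
          · -- interior vertices are not adjacent to x
            intro v hv hvm hva
            rcases (hpmem v).mp hv with h | h
            · by_cases hvc : v = c
              · rw [hvc]; exact hxc
              · exact (hs6 v h hvm hvc).1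
            · obtain ⟨hvq, hvc⟩ := htail v h
              exact (hqint v hvq hva hvc).1
          · exact fun hmc => hs4
          · exact fun hac => by rw [hnb]; simp
          · intro v hv hvm hva hvc
            rcases (hpmem v).mp hv with h | h
            · exact (hs6 v h hvm hvc).2
            · obtain ⟨hvq, hvc'⟩ := htail v h
              exact (hqint v hvq hva hvc').2
        -- now split p₂ at c
        set tk := p₂.takeUntil c hcp with htkdef
        set dp := p₂.dropUntil c hcp with hdpdef
        have hsplit : p₂.support = tk.support ++ dp.support.tail := by
          rw [htkdef, hdpdef, ← Walk.support_append, p₂.take_spec hcp]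
        have hndsplit : (tk.support ++ dp.support.tail).Nodup := by
          rw [← hsplit]; exact hp₂.support_nodup
        have hdisj : ∀ y, y ∈ tk.support → y ∈ dp.support.tail → False := fun y h1 h2 =>
          (List.disjoint_of_nodup_append hndsplit) h1 h2
        have htdc : ∀ y, y ∈ tk.support → y ∈ dp.support → y = c := by
          intro y h1 h2
          rw [dp.support_eq_cons, List.mem_cons] at h2
          rcases h2 with h2 | h2
          · exact h2
          · exact absurd h2 (fun hh => hdisj y h1 hh)
        have hb₂tk : b₂ ∉ tk.support := fun h =>
          hcb₂ ((htdc b₂ h dp.end_mem_support)).symm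
        have ha₂dp : a₂ ∉ dp.support := fun h =>
          hca₂ ((htdc a₂ tk.start_mem_support h)).symm
        have htksub : ∀ y ∈ tk.support, y ∈ p₂.support :=
          fun y hy => p₂.support_takeUntil_subset hcp hy
        have hdpsub : ∀ y ∈ dp.support, y ∈ p₂.support :=
          fun y hy => p₂.support_dropUntil_subset hcp hy
        by_cases hw : w₂ ∈ tk.support ∧ w₂ ≠ c
        · -- use the drop side, from b₂
          have hwdp : ∀ y ∈ dp.support, y ≠ c → y ≠ w₂ := by
            intro y hy hyc hyw
            exact hyc (htdc y (by rw [← hyw] at hw; exact hw.1) hy)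
          have hb₂w : b₂ ≠ w₂ := fun h => hb₂tk (by rw [h]; exact hw.1)
          apply finish b₂ dp.reverse ((hp₂.dropUntil hcp).reverse)
          · intro y hy
            rw [Walk.support_reverse, List.mem_reverse] at hy
            exact hp₂s y (hdpsub y hy)
          · exact hxb₂
          · rw [← g2 b₂ (hp₂s _ p₂.end_mem_support) (fun h => hcb₂ h.symm)]
            exact hwb₂ hb₂w
          · intro y hy hym hyc
            rw [Walk.support_reverse, List.mem_reverse] at hy
            have hya₂ : y ≠ a₂ := fun h => ha₂dp (h ▸ hy)
            have hyS' : y ∈ S' := hp₂s y (hdpsub y hy)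
            refine ⟨hp₂int y (hdpsub y hy) hya₂ hym, ?_⟩
            rw [← g2 y hyS' hyc]
            exact hwint y (hdpsub y hy) hya₂ hym (hwdp y hy hyc)
        · -- use the take side, from a₂
          push_neg at hw
          have hwtk : ∀ y ∈ tk.support, y ≠ c → y ≠ w₂ := by
            intro y hy hyc hyw
            exact hyc (by rw [hyw]; exact hw (by rw [← hyw]; exact hy))
          have ha₂w : a₂ ≠ w₂ := by
            intro h
            exact hca₂ (h ▸ (hw (h ▸ tk.start_mem_support))).symm
          apply finish a₂ tk (hp₂.takeUntil hcp)
          · intro y hy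
            exact hp₂s y (htksub y hy)
          · exact hxa₂
          · rw [← g2 a₂ (hp₂s _ p₂.start_mem_support) (fun h => hca₂ h.symm)]
            exact hwa₂ ha₂w
          · intro y hy hym hyc
            have hyb₂ : y ≠ b₂ := fun h => hb₂tk (h ▸ hy)
            have hyS' : y ∈ S' := hp₂s y (htksub y hy)
            refine ⟨hp₂int y (htksub y hy) hym hyb₂, ?_⟩
            rw [← g2 y hyS' hyc]
            exact hwint y (htksub y hy) hym hyb₂ (hwtk y hy hyc)

lemma firstEdge_mem {u v : V} (p : G.Walk u v) (h : ¬ p.Nil) :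
    s(u, p.getVert 1) ∈ p.edges := by
  cases p with
  | nil => exact absurd (by simp) h
  | cons h' t => simp [Walk.edges_cons]

lemma cycle_nbr [DecidableEq V] {v : V} (d : G.Walk v v) (hd : d.IsCycle)
    (hchord : ∀ a ∈ d.support, ∀ b ∈ d.support, G.Adj a b → s(a, b) ∈ d.edges) :
    (G.neighborSet v ∩ {y | y ∈ d.support}).ncard = 2 := by
  cases d with
  | nil => exact absurd hd Walk.IsCycle.not_of_nil
  | cons h t =>
    rename_i w
    have hlen := hd.three_le_length
    rw [Walk.length_cons] at hlen
    obtain ⟨htpath, hnotedge⟩ := (Walk.cons_isCycle_iff t h).mp hd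
    have hznn : ¬ t.reverse.Nil := by
      rw [Walk.not_nil_iff_lt_length, Walk.length_reverse]; omega
    set z := t.reverse.getVert 1 with hzdef
    have hzadj : G.Adj v z := Walk.adj_snd hznn
    have hzmem : z ∈ t.support := by
      have := getVert_one_mem_support t.reverse hznn
      rwa [Walk.support_reverse, List.mem_reverse] at this
    have hwz : w ≠ z := by
      intro h'
      apply hnotedge
      have h2 := firstEdge_mem t.reverse hznn
      rw [← hzdef, ← h'] at h2
      rwa [Walk.edges_reverse, List.mem_reverse] at h2
    have hset : G.neighborSet v ∩ {y | y ∈ (Walk.cons h t).support} = {w, z} := by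
      ext y
      simp only [Set.mem_inter_iff, mem_neighborSet, Set.mem_setOf_eq, Set.mem_insert_iff,
        Set.mem_singleton_iff]
      constructor
      · rintro ⟨hadj, hmem⟩
        have := hchord v (Walk.start_mem_support _) y hmem hadj
        rw [Walk.edges_cons, List.mem_cons] at this
        rcases this with h' | h'
        · rw [Sym2.eq_iff] at h'
          rcases h' with ⟨-, rfl⟩ | ⟨h1, -⟩
          · exact Or.inl rfl
          · exact absurd h1 h.ne
        · exact Or.inr (lastEdge htpath h')
      · rintro (rfl | rfl)
        · exact ⟨h, by simp⟩
        · exact ⟨hzadj, by simp [hzmem]⟩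
    rw [hset]
    exact Set.ncard_pair hwz

lemma mem_support_iff_mem_tail {v : V} (d : G.Walk v v) (h : ¬ d.Nil) (y : V) :
    y ∈ d.support ↔ y ∈ d.support.tail := by
  cases d with
  | nil => exact absurd (by simp) h
  | cons h' t =>
    rw [Walk.support_cons, List.tail_cons, List.mem_cons]
    constructor
    · rintro (rfl | hh)
      · exact t.end_mem_support
      · exact hh
    · exact Or.inr

lemma cycle_nbr_all [DecidableEq V] {v : V} (d : G.Walk v v) (hd : d.IsCycle)
    (hchord : ∀ a ∈ d.support, ∀ b ∈ d.support, G.Adj a b → s(a, b) ∈ d.edges)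
    {u : V} (hu : u ∈ d.support) :
    (G.neighborSet u ∩ {y | y ∈ d.support}).ncard = 2 := by
  have hrot := hd.rotate hu
  have hsup : ∀ y, y ∈ (d.rotate u hu).support ↔ y ∈ d.support := by
    intro y
    rw [mem_support_iff_mem_tail _ hrot.not_nil, mem_support_iff_mem_tail _ hd.not_nil,
      (Walk.support_rotate d u hu).mem_iff]
  have hedg : ∀ e, e ∈ (d.rotate u hu).edges ↔ e ∈ d.edges := fun e =>
    (Walk.rotate_edges d u hu).mem_iff
  have hsetEq : {y | y ∈ (d.rotate u hu).support} = {y | y ∈ d.support} := by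
    ext y; exact hsup y
  rw [← hsetEq]
  exact cycle_nbr (d.rotate u hu) hrot
    (fun a ha b hb hab => (hedg _).mpr (hchord a ((hsup a).mp ha) b ((hsup b).mp hb) hab))

lemma ncard_nbr_eq_card [Fintype V] [DecidableEq V] {G : SimpleGraph V} [DecidableRel G.Adj]
    (v : V) : (G.neighborSet v).ncard = (G.neighborFinset v).card := by
  rw [neighborFinset_def, Set.ncard_eq_toFinset_card']

end Aux

/-- If `G \ x` is a forest, then either `V(G) = N[x]` and `G \ x`
has no edges, or `V(G) \ N[x]` contains a vertex of degree at most one, or `G` has an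
induced cycle through `x` in which every vertex other than `x`, except possibly one,
has degree two in `G`. -/
theorem forest_plus_vertex {V : Type*} [Fintype V] (G : SimpleGraph V) (x : V)
    (hforest : (G.induce ({x}ᶜ : Set V)).IsAcyclic) :
    (insert x (G.neighborSet x) = Set.univ ∧
      ∀ a b : V, a ≠ x → b ≠ x → ¬ G.Adj a b) ∨
    (∃ v, v ∉ insert x (G.neighborSet x) ∧ (G.neighborSet v).ncard ≤ 1) ∨
    (∃ C : Set V, IsInducedCycle G C ∧ x ∈ C ∧
      ∃ w, ∀ v ∈ C, v ≠ x → v ≠ w → (G.neighborSet v).ncard = 2) := by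
  classical
  by_cases h1 : ∃ v, v ∉ insert x (G.neighborSet x) ∧ (G.neighborSet v).ncard ≤ 1
  · exact Or.inr (Or.inl h1)
  by_cases h2 : insert x (G.neighborSet x) = Set.univ ∧
      ∀ a b : V, a ≠ x → b ≠ x → ¬ G.Adj a b
  · exact Or.inl h2
  push_neg at h1
  -- find a starting edge avoiding x
  have hstart : ∃ v0 y0 : V, v0 ≠ x ∧ y0 ≠ x ∧ G.Adj v0 y0 := by
    by_cases hins : insert x (G.neighborSet x) = Set.univ
    · have hB : ¬ ∀ a b : V, a ≠ x → b ≠ x → ¬ G.Adj a b := fun hb => h2 ⟨hins, hb⟩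
      push_neg at hB
      obtain ⟨a, b, ha, hb, hab⟩ := hB
      exact ⟨a, b, ha, hb, hab⟩
    · obtain ⟨v, hv⟩ : ∃ v, v ∉ insert x (G.neighborSet x) := by
        by_contra hcon
        push_neg at hcon
        exact hins (Set.eq_univ_of_forall hcon)
      have hv2 := h1 v hv
      have hvnx : v ≠ x := fun h => hv (by rw [h]; exact Set.mem_insert x _)
      have hxnbr : ¬ G.Adj x v := fun h => hv (Set.mem_insert_of_mem _ h)
      obtain ⟨y, hy⟩ := Set.nonempty_of_ncard_ne_zero (by omega : (G.neighborSet v).ncard ≠ 0)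
      have hynx : y ≠ x := fun h => hxnbr ((h ▸ hy : G.Adj v x).symm)
      exact ⟨v, y, hvnx, hynx, hy⟩
  obtain ⟨v0, y0, hv0x, hy0x, hadj0⟩ := hstart
  -- T : the component of G - x containing v0
  set T : Finset V := Finset.univ.filter (fun v => ∃ p : G.Walk v0 v, x ∉ p.support) with hT
  have hTmem : ∀ v, v ∈ T ↔ ∃ p : G.Walk v0 v, x ∉ p.support := by
    intro v; rw [hT, Finset.mem_filter]; simp
  have hv0T : v0 ∈ T := (hTmem v0).mpr ⟨Walk.nil, by simp [hv0x.symm]⟩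
  have hy0T : y0 ∈ T := (hTmem y0).mpr ⟨Walk.cons hadj0 Walk.nil, by
    simp [hv0x.symm, hy0x.symm]⟩
  have hxT : x ∉ T := fun h => by
    obtain ⟨p, hp⟩ := (hTmem x).mp h
    exact hp p.end_mem_support
  have hTx : ∀ y ∈ T, y ≠ x := fun y hy h => hxT (h ▸ hy)
  have hclo : ∀ u ∈ T, ∀ y, G.Adj u y → y ≠ x → y ∈ T := by
    intro u hu y hadj hynx
    obtain ⟨p, hp⟩ := (hTmem u).mp hu
    refine (hTmem y).mpr ⟨p.append (Walk.cons hadj Walk.nil), ?_⟩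
    rw [Walk.mem_support_append_iff]
    push_neg
    refine ⟨hp, ?_⟩
    simp only [Walk.support_cons, Walk.support_nil, List.mem_cons, List.not_mem_nil, or_false,
      List.mem_singleton]
    push_neg
    exact ⟨fun h => hTx u hu h.symm |>.elim, fun h => hynx h.symm |>.elim⟩
  have hTconn : ∀ u ∈ T, ∀ v ∈ T, ∃ p : G.Walk u v, ∀ y ∈ p.support, y ∈ T := by
    intro u hu v hv
    obtain ⟨pu, hpu⟩ := (hTmem u).mp hu
    obtain ⟨pv, hpv⟩ := (hTmem v).mp hv
    refine ⟨pu.reverse.append pv, ?_⟩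
    intro y hy
    rw [Walk.mem_support_append_iff] at hy
    rcases hy with hy | hy
    · rw [Walk.support_reverse, List.mem_reverse] at hy
      exact (hTmem y).mpr ⟨pu.takeUntil y hy, fun h =>
        hpu (pu.support_takeUntil_subset hy h)⟩
    · exact (hTmem y).mpr ⟨pv.takeUntil y hy, fun h =>
        hpv (pv.support_takeUntil_subset hy h)⟩
  have hTcard : 2 ≤ T.card := Finset.one_lt_card.mpr ⟨v0, hv0T, y0, hy0T, hadj0.ne⟩
  have hTleaf : ∀ v ∈ T, (G.neighborFinset v ∩ T).card ≤ 1 → G.Adj x v := by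
    intro v hv hc
    by_contra hnadj
    have hsub : G.neighborFinset v ⊆ T := by
      intro y hy
      rw [mem_neighborFinset] at hy
      have hynx : y ≠ x := fun h => hnadj (h ▸ hy).symm
      exact hclo v hv y hy hynx
    have heq : G.neighborFinset v ∩ T = G.neighborFinset v :=
      Finset.inter_eq_left.mpr hsub
    rw [heq] at hc
    have hvN : v ∉ insert x (G.neighborSet x) := by
      intro h
      rcases Set.mem_insert_iff.mp h with h | h
      · exact hTx v hv h
      · exact hnadj h
    have := h1 v hvN
    rw [ncard_nbr_eq_card] at this
    omega
  obtain ⟨a, b, p, hp, hplen, hps, hxa, hxb, hint, w, hwa, hwb, hwint⟩ :=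
    mainLemma hforest T.card T le_rfl hxT hTconn hTcard hTleaf
  have hab : a ≠ b := by
    intro h
    subst h
    rw [Walk.isPath_iff_eq_nil] at hp
    rw [hp] at hplen
    simp at hplen
  have haT : a ∈ T := hps a p.start_mem_support
  have hbT : b ∈ T := hps b p.end_mem_support
  have hxp : x ∉ p.support := fun h => hxT (hps x h)
  -- degree computations
  have hdeg_end : ∀ v ∈ p.support, G.Adj x v → (G.neighborFinset v ∩ T).card = 1 →
      (G.neighborSet v).ncard = 2 := by
    intro v hv hadj hc
    rw [ncard_nbr_eq_card]
    have heq : G.neighborFinset v = insert x (G.neighborFinset v ∩ T) := by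
      ext y
      rw [Finset.mem_insert, Finset.mem_inter, mem_neighborFinset]
      constructor
      · intro hy
        by_cases hyx : y = x
        · exact Or.inl hyx
        · exact Or.inr ⟨hy, hclo v (hps v hv) y hy hyx⟩
      · rintro (rfl | ⟨hy, _⟩)
        · exact hadj.symm
        · exact hy
    rw [heq, Finset.card_insert_of_notMem (fun h => hxT (Finset.mem_inter.mp h).2), hc]
  have hdeg_int : ∀ v ∈ p.support, ¬ G.Adj x v → (G.neighborFinset v ∩ T).card = 2 →
      (G.neighborSet v).ncard = 2 := by
    intro v hv hadj hc
    rw [ncard_nbr_eq_card]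
    have heq : G.neighborFinset v = G.neighborFinset v ∩ T := by
      ext y
      rw [Finset.mem_inter, mem_neighborFinset]
      constructor
      · intro hy
        have hyx : y ≠ x := fun h => hadj ((h ▸ hy : G.Adj v x)).symm
        exact ⟨hy, hclo v (hps v hv) y hy hyx⟩
      · rintro ⟨hy, _⟩
        exact hy
    rw [heq, hc]
  -- build the cycle
  set e := p.append (Walk.cons hxb.symm Walk.nil) with hedef
  have hesup : e.support = p.support ++ [x] := by
    rw [hedef, Walk.support_append, Walk.support_cons, Walk.support_nil]
    rfl
  have hepath : e.IsPath := by
    rw [Walk.isPath_def, hesup, List.nodup_append]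
    exact ⟨hp.support_nodup, List.nodup_singleton x,
      fun y hy w hyx hyw => by subst hyw; exact hxp ((List.mem_singleton.mp hyx) ▸ hy)⟩
  have heedges : e.edges = p.edges ++ [s(b, x)] := by
    rw [hedef, Walk.edges_append, Walk.edges_cons, Walk.edges_nil]
  set d := Walk.cons hxa e with hddef
  have hdcyc : d.IsCycle := by
    rw [hddef, Walk.cons_isCycle_iff]
    refine ⟨hepath, ?_⟩
    rw [heedges, List.mem_append, List.mem_singleton]
    push_neg
    constructor
    · exact fun h => hxp (Walk.fst_mem_support_of_mem_edges p h)
    · intro h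
      rw [Sym2.eq_iff] at h
      rcases h with ⟨hxb', -⟩ | ⟨-, hax⟩
      · exact hTx b hbT hxb'.symm
      · exact hab hax
  have hdsup : ∀ y, y ∈ d.support ↔ y = x ∨ y ∈ p.support := by
    intro y
    rw [hddef, Walk.support_cons, List.mem_cons, hesup, List.mem_append, List.mem_singleton]
    tauto
  have hdedges : ∀ ee, ee ∈ d.edges ↔ ee = s(x, a) ∨ ee ∈ p.edges ∨ ee = s(b, x) := by
    intro ee
    rw [hddef, Walk.edges_cons, List.mem_cons, heedges, List.mem_append, List.mem_singleton]
  -- chordlessness of the cycle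
  have hSx : ∀ y ∈ p.support, y ∈ ({x}ᶜ : Set V) := fun y hy h =>
    hxT (by rw [← Set.mem_singleton_iff.mp h]; exact hps y hy)
  have hchord : ∀ a' ∈ d.support, ∀ b' ∈ d.support, G.Adj a' b' → s(a', b') ∈ d.edges := by
    intro a' ha' b' hb' hab'
    rw [hdsup] at ha' hb'
    rcases ha' with rfl | ha'
    · -- a' = x
      rcases hb' with rfl | hb'
      · exact absurd hab' (G.loopless.irrefl _)
      · have : b' = a ∨ b' = b := by
          by_contra hcon
          push_neg at hcon
          exact (hint b' hb' hcon.1 hcon.2) hab'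
        rcases this with rfl | rfl
        · exact (hdedges _).mpr (Or.inl rfl)
        · exact (hdedges _).mpr (Or.inr (Or.inr (Sym2.eq_swap)))
    · rcases hb' with rfl | hb'
      · have : a' = a ∨ a' = b := by
          by_contra hcon
          push_neg at hcon
          exact (hint a' ha' hcon.1 hcon.2) hab'.symm
        rcases this with rfl | rfl
        · exact (hdedges _).mpr (Or.inl Sym2.eq_swap)
        · exact (hdedges _).mpr (Or.inr (Or.inr rfl))
      · have := chord hforest hp hSx ha' hb' hab'
        exact (hdedges _).mpr (Or.inr (Or.inl this))
  -- the cycle vertex set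
  refine Or.inr (Or.inr ⟨d.toSubgraph.verts, ⟨Set.toFinite _, ?_, ?_, ?_⟩, ?_, w, ?_⟩)
  · -- 3 ≤ ncard
    have hsub : ({x, a, b} : Set V) ⊆ d.toSubgraph.verts := by
      intro y hy
      rw [Walk.mem_verts_toSubgraph, hdsup]
      rcases hy with rfl | rfl | rfl
      · exact Or.inl rfl
      · exact Or.inr p.start_mem_support
      · exact Or.inr p.end_mem_support
    have h3 : ({x, a, b} : Set V).ncard = 3 := by
      rw [Set.ncard_insert_of_notMem (by
        simp only [Set.mem_insert_iff, Set.mem_singleton_iff]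
        push_neg
        exact ⟨fun h => hTx a haT h.symm, fun h => hTx b hbT h.symm⟩) (Set.toFinite _),
        Set.ncard_pair hab]
    rw [← h3]
    exact Set.ncard_le_ncard hsub (Set.toFinite _)
  · -- connected
    exact (d.toSubgraph_connected).coe.mono (fun u v huv => by exact d.toSubgraph.adj_sub huv)
  · -- every vertex has two neighbors in C
    intro v hv
    rw [Walk.verts_toSubgraph]
    exact cycle_nbr_all d hdcyc hchord ((Walk.mem_verts_toSubgraph d).mp hv)
  · rw [Walk.mem_verts_toSubgraph, hdsup]; exact Or.inl rfl
  · -- the degree condition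
    intro v hv hvx hvw
    rw [Walk.mem_verts_toSubgraph, hdsup] at hv
    rcases hv with rfl | hv
    · exact absurd rfl hvx
    by_cases hva : v = a
    · subst hva
      exact hdeg_end v p.start_mem_support hxa (hwa hvw)
    by_cases hvb : v = b
    · subst hvb
      exact hdeg_end v p.end_mem_support hxb (hwb hvw)
    · exact hdeg_int v hv (hint v hv hva hvb) (hwint v hv hva hvb hvw)
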